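/- (Claim I) For vectors a, b in {0,1}^d with d >= 1, the vectors a and b are orthogonal if and only if psi_B(b) is a subsequence of psi_A(a). -/

import Mathlib

open List

/-- The alphabet {0, 1, #}. -/
inductive Letter3 : Type
  | zero : Letter3
  | one : Letter3
  | hash : Letter3
deriving DecidableEq

/-- The letter of `Letter3` corresponding to a Boolean value. -/
def lit : Bool → Letter3
  | false => .zero
  | true => .one

/-- `psi_A(0) = 01#`, `psi_A(1) = 00#`. -/
def psiA : Bool → List Letter3
  | false => [.zero, .one, .hash]
  | true => [.zero, .zero, .hash]

/-- `psi_B(y) = y#`. -/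
def psiB (y : Bool) : List Letter3 := [lit y, .hash]

/-- `psi_A` applied letterwise to a vector in `{0,1}^d`. -/
def psiAvec {d : ℕ} (v : Fin d → Bool) : List Letter3 :=
  (List.ofFn (fun k => psiA (v k))).flatten

/-- `psi_B` applied letterwise to a vector in `{0,1}^d`. -/
def psiBvec {d : ℕ} (v : Fin d → Bool) : List Letter3 :=
  (List.ofFn (fun k => psiB (v k))).flatten

lemma count_hash_psiB (l : List Bool) :
    (l.flatMap psiB).count Letter3.hash = l.length := by
  induction l with
  | nil => simp
  | cons y t ih => cases y <;> simp [psiB, lit, List.count_cons, ih]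

lemma count_hash_psiA (l : List Bool) :
    (l.flatMap psiA).count Letter3.hash = l.length := by
  induction l with
  | nil => simp
  | cons y t ih => cases y <;> simp [psiA, List.count_cons, ih]

lemma block (y x : Bool) (r1 r2 : List Letter3)
    (hc : r2.count Letter3.hash ≤ r1.count Letter3.hash)
    (hs : lit y :: .hash :: r1 <+ psiA x ++ r2) :
    (x && y) = false ∧ r1 <+ r2 := by
  have bad : ¬ (Letter3.hash :: r1 <+ r2) := by
    intro h
    have := h.count_le Letter3.hash
    simp [List.count_cons] at this
    omega
  have bad2 : ∀ z : Letter3, z ≠ .hash → ¬ (z :: Letter3.hash :: r1 <+ r2) := by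
    intro z hz h
    have := h.count_le Letter3.hash
    simp [List.count_cons, hz] at this
    omega
  cases x <;> cases y <;> simp [psiA, lit] at hs ⊢ <;>
  · rcases hs with _ | ⟨_, hs⟩ | ⟨_, hs⟩ <;>
    first
    | (rcases hs with _ | ⟨_, hs⟩ | ⟨_, hs⟩ <;>
       first
       | (rcases hs with _ | ⟨_, hs⟩ | ⟨_, hs⟩ <;>
          first
          | exact hs
          | exact absurd hs bad
          | exact absurd hs (bad2 _ (by simp)))
       | exact hs
       | exact absurd hs bad
       | exact absurd hs (bad2 _ (by simp)))
    | exact hs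
    | exact absurd hs bad
    | exact absurd hs (bad2 _ (by simp))

lemma forward (l : List (Bool × Bool)) (h : ∀ p ∈ l, (p.1 && p.2) = false) :
    (l.map Prod.snd).flatMap psiB <+ (l.map Prod.fst).flatMap psiA := by
  induction l with
  | nil => simp
  | cons p t ih =>
    simp only [List.map_cons, List.flatMap_cons]
    refine Sublist.append ?_ (ih fun q hq => h q (List.mem_cons_of_mem _ hq))
    have hp := h p List.mem_cons_self
    rcases p with ⟨x, y⟩
    cases x <;> cases y <;> simp_all [psiA, psiB, lit] <;> decide

lemma backward : ∀ la lb : List Bool, la.length = lb.length →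
    lb.flatMap psiB <+ la.flatMap psiA →
    List.Forall₂ (fun a b => (a && b) = false) la lb := by
  intro la
  induction la with
  | nil =>
    intro lb h _
    cases lb with
    | nil => exact List.Forall₂.nil
    | cons _ _ => simp at h
  | cons x t ih =>
    intro lb h hs
    cases lb with
    | nil => simp at h
    | cons y s =>
      simp only [List.length_cons, Nat.succ_inj] at h
      simp only [List.flatMap_cons, psiB, List.cons_append, List.nil_append] at hs
      have hc : (t.flatMap psiA).count Letter3.hash ≤ (s.flatMap psiB).count Letter3.hash := by
        rw [count_hash_psiA, count_hash_psiB, h]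
      obtain ⟨h1, h2⟩ := block y x _ _ hc hs
      exact List.Forall₂.cons h1 (ih s h h2)

/-- (Claim I) Vectors `a, b ∈ {0,1}^d` are orthogonal iff
`psi_B(b)` is a subsequence of `psi_A(a)`. -/
theorem orthogonal_iff_psiBvec_sublist_psiAvec {d : ℕ} (hd : 1 ≤ d)
    (a b : Fin d → Bool) :
    (∀ k, (a k && b k) = false) ↔ psiBvec b <+ psiAvec a := by
  have hA : psiAvec a = (List.ofFn a).flatMap psiA := by
    rw [psiAvec, List.flatMap, List.map_ofFn]; rfl
  have hB : psiBvec b = (List.ofFn b).flatMap psiB := by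
    rw [psiBvec, List.flatMap, List.map_ofFn]; rfl
  rw [hA, hB]
  constructor
  · intro h
    have := forward (List.ofFn (fun k => (a k, b k)))
      (by
        intro p hp
        rw [List.mem_ofFn] at hp
        obtain ⟨k, rfl⟩ := hp
        exact h k)
    simpa [List.map_ofFn, Function.comp_def] using this
  · intro h
    have hf := backward (List.ofFn a) (List.ofFn b) (by simp) h
    intro k
    have := List.forall₂_iff_get.mp hf
    simpa using this.2 k (by simp) (by simp)
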